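/- Every unipotent symplectic matrix is the exponential of a nilpotent infinitesimally symplectic matrix of the form J·S with S symmetric: if M ∈ M_{2n}(ℝ) satisfies MᵀJ_{2n}M = J_{2n} and (M − I_{2n})^{2n} = 0, then there exists a symmetric matrix S ∈ M_{2n}(ℝ) such that J_{2n}·S is nilpotent and M = exp(J_{2n}·S). -/

import Mathlib

open Matrix


open Matrix

open Polynomial Finset

noncomputable def plog (m : ℕ) : ℝ[X] := ∑ k ∈ range m, C ((-1)^(k+1) / (k:ℝ)) * X^k
noncomputable def pexp (m : ℕ) : ℝ[X] := ∑ j ∈ range m, C ((j.factorial : ℝ)⁻¹) * (plog m)^j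
noncomputable def pginv (m : ℕ) : ℝ[X] := (∑ k ∈ range m, (-X)^k) - 1

lemma plog_eval_zero (m : ℕ) : (plog m).eval 0 = 0 := by
  rw [plog, eval_finset_sum]
  apply Finset.sum_eq_zero
  intro k _
  rcases k with _ | k
  · simp
  · simp [zero_pow]

lemma X_dvd_plog (m : ℕ) : X ∣ plog m :=
  X_dvd_iff.2 (by rw [coeff_zero_eq_eval_zero]; exact plog_eval_zero m)

lemma pginv_eval_zero (m : ℕ) (hm : 1 ≤ m) : (pginv m).eval 0 = 0 := by
  obtain ⟨m', rfl⟩ : ∃ m', m = m' + 1 := ⟨m - 1, by omega⟩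
  rw [pginv, eval_sub, eval_finset_sum]
  rw [Finset.sum_range_succ']
  simp [zero_pow]

lemma X_dvd_pginv (m : ℕ) (hm : 1 ≤ m) : X ∣ pginv m :=
  X_dvd_iff.2 (by rw [coeff_zero_eq_eval_zero]; exact pginv_eval_zero m hm)

lemma dplog (m : ℕ) : derivative (plog m) = ∑ k ∈ range (m-1), (-X)^k := by
  rcases m with _ | m
  · simp [plog]
  rw [plog, Finset.sum_range_succ']
  simp only [Nat.add_sub_cancel]
  rw [derivative_add, derivative_sum]
  have h0 : derivative (C ((-1:ℝ)^(0+1) / ((0:ℕ):ℝ)) * X^0) = 0 := by simp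
  rw [h0, add_zero]
  apply Finset.sum_congr rfl
  intro k _
  rw [derivative_C_mul_X_pow]
  have hk : ((k:ℝ)+1) ≠ 0 := by positivity
  have : ((-1:ℝ))^(k+1+1) / ((k+1:ℕ):ℝ) * ((k+1:ℕ):ℝ) = (-1)^k := by
    push_cast
    field_simp
    ring
  rw [this]
  rw [neg_pow, Nat.add_sub_cancel]
  simp [← C_pow, C_neg, C_1]
  ring

lemma one_add_X_mul_dplog (m : ℕ) :
    (1 + X) * derivative (plog m) = 1 - (-X)^(m-1) := by
  rw [dplog]
  have hg := geom_sum_mul (-X : ℝ[X]) (m-1)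
  linear_combination -hg

lemma dpexp (m : ℕ) (hm : 1 ≤ m) :
    derivative (pexp m) =
      derivative (plog m) * (pexp m - C (((m-1).factorial : ℝ)⁻¹) * (plog m)^(m-1)) := by
  obtain ⟨m', rfl⟩ : ∃ m', m = m' + 1 := ⟨m - 1, by omega⟩
  simp only [Nat.add_sub_cancel]
  rw [pexp, derivative_sum, Finset.sum_range_succ']
  have h0 : derivative (C (((0:ℕ).factorial : ℝ)⁻¹) * (plog (m'+1))^0) = 0 := by simp
  rw [h0, add_zero]
  rw [Finset.sum_range_succ, add_sub_cancel_right, Finset.mul_sum]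
  apply Finset.sum_congr rfl
  intro j _
  rw [derivative_C_mul, derivative_pow]
  have hfac : (((j+1).factorial : ℝ))⁻¹ * ((j+1:ℕ):ℝ) = ((j.factorial : ℝ))⁻¹ := by
    have h1 : ((j+1).factorial : ℝ) = ((j+1:ℕ):ℝ) * (j.factorial : ℝ) := by
      rw [Nat.factorial_succ]; push_cast; ring
    have h2 : ((j+1:ℕ):ℝ) ≠ 0 := by positivity
    have h3 : (j.factorial : ℝ) ≠ 0 := by positivity
    field_simp [h1]
    exact h1.symm
  simp only [Nat.add_sub_cancel]
  rw [show (C (((j+1).factorial : ℝ)⁻¹)) * (C ((j+1:ℕ):ℝ) * plog (m'+1) ^ j * derivative (plog (m'+1)))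
      = derivative (plog (m'+1)) * ((C (((j+1).factorial : ℝ)⁻¹) * C ((j+1:ℕ):ℝ)) * plog (m'+1) ^ j) from by ring]
  rw [← C_mul, hfac]

lemma pexp_key (m : ℕ) (hm : 2 ≤ m) : ∃ q : ℝ[X], pexp m = 1 + X + X^m * q := by
  set D : ℝ[X] := pexp m - 1 - X with hD
  have hdvd : X^(m-1) ∣ ((1 + X) * derivative D - D) := by
    have h1 : (1 + X) * derivative D - D = (1 + X) * derivative (pexp m) - pexp m := by
      rw [hD]
      simp only [derivative_sub, derivative_one, derivative_X]
      ring
    rw [h1, dpexp m (by omega), ← mul_assoc, one_add_X_mul_dplog]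
    have expand : (1 - (-X)^(m-1)) * (pexp m - C (((m-1).factorial : ℝ)⁻¹) * (plog m)^(m-1)) - pexp m
        = -((-X)^(m-1) * pexp m) - (1 - (-X)^(m-1)) * C (((m-1).factorial : ℝ)⁻¹) * (plog m)^(m-1) := by
      ring
    rw [expand]
    apply dvd_sub
    · rw [dvd_neg, neg_pow]
      exact (dvd_rfl.mul_left _).mul_right _
    · exact (pow_dvd_pow_of_dvd (X_dvd_plog m) _).mul_left _
  obtain ⟨r, hr⟩ := hdvd
  have hr' : derivative D + X * derivative D = D + X^(m-1) * r := by
    have : (1 + X) * derivative D = D + X^(m-1) * r := by linear_combination hr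
    linear_combination this
  have base : D.coeff 0 = 0 := by
    rw [hD]
    simp only [coeff_sub, coeff_one, coeff_X_zero]
    rw [coeff_zero_eq_eval_zero, pexp, eval_finset_sum]
    obtain ⟨m', rfl⟩ : ∃ m', m = m' + 1 := ⟨m - 1, by omega⟩
    rw [Finset.sum_range_succ']
    simp [plog_eval_zero, zero_pow]
  have step : ∀ j, j + 1 < m → D.coeff j = 0 → D.coeff (j+1) = 0 := by
    intro j hj hDj
    have hc := congrArg (fun p => coeff p j) hr'
    simp only [coeff_add] at hc
    have hXpow : (X^(m-1) * r).coeff j = 0 := by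
      rw [mul_comm, coeff_mul_X_pow']
      simp only [if_neg (by omega : ¬ (m - 1 ≤ j))]
    rw [hXpow, add_zero, hDj] at hc
    have hder : (derivative D).coeff j = D.coeff (j+1) * ((j:ℝ)+1) := coeff_derivative D j
    rcases j with _ | i
    · have hX0 : (X * derivative D).coeff 0 = 0 := by
        rw [mul_coeff_zero, coeff_X_zero, zero_mul]
      rw [hX0, add_zero, hder] at hc
      have : ((0:ℝ)+1) ≠ 0 := by norm_num
      field_simp at hc
      simpa using hc
    · rw [coeff_X_mul, coeff_derivative, coeff_derivative, hDj, zero_mul, add_zero] at hc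
      have hne : (((i+1:ℕ)):ℝ) + 1 ≠ 0 := by positivity
      have := mul_eq_zero.mp hc
      rcases this with h | h
      · exact h
      · exact absurd h hne
  have hall : ∀ j, j < m → D.coeff j = 0 := by
    intro j
    induction j with
    | zero => intro _; exact base
    | succ i ih => intro h; exact step i h (ih (by omega))
  obtain ⟨q, hq⟩ := X_pow_dvd_iff.mpr hall
  exact ⟨q, by rw [hD] at hq; linear_combination hq⟩

open Polynomial Finset Matrix

section Helpers

variable {A : Type*} [Ring A] [Algebra ℝ A]

lemma pow_eq_zero_of_le' {a : A} {m k : ℕ} (h : a ^ m = 0) (hmk : m ≤ k) : a ^ k = 0 := by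
  obtain ⟨d, rfl⟩ := Nat.exists_eq_add_of_le hmk
  rw [pow_add, h, zero_mul]

lemma conj_pow' {u v y : A} (hu : u * v = 1) (hvu : v * u = 1) (k : ℕ) :
    (u * y * v) ^ k = u * y ^ k * v := by
  induction k with
  | zero => rw [pow_zero, pow_zero, mul_one, hu]
  | succ k ih =>
    rw [pow_succ, ih, pow_succ,
      show u * y ^ k * v * (u * y * v) = u * y ^ k * (v * u) * (y * v) from by noncomm_ring,
      hvu, mul_one, ← mul_assoc, mul_assoc u]

lemma aeval_conj {u v : A} (hu : u * v = 1) (hv : v * u = 1) (y : A) (p : ℝ[X]) :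
    Polynomial.aeval (u * y * v) p = u * Polynomial.aeval y p * v := by
  induction p using Polynomial.induction_on' with
  | add p q hp hq => rw [map_add, map_add, hp, hq]; noncomm_ring
  | monomial k a =>
    rw [aeval_monomial, aeval_monomial, conj_pow' hu hv]
    rw [← Algebra.smul_def, ← Algebra.smul_def, mul_smul_comm, smul_mul_assoc]

lemma nilpotent_eq_zero_of_expsum (a : A) (m : ℕ) (hm : 2 ≤ m) (ha : a ^ m = 0)
    (h1 : ∑ j ∈ Finset.range m, ((j.factorial : ℝ))⁻¹ • a ^ j = 1) : a = 0 := by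
  obtain ⟨m2, rfl⟩ : ∃ m2, m = m2 + 1 + 1 := ⟨m - 2, by omega⟩
  set B : A := ∑ j ∈ Finset.range (m2 + 1), (((j+1).factorial : ℝ))⁻¹ • a ^ j with hB
  have hAB : a * B = 0 := by
    rw [Finset.sum_range_succ'] at h1
    have h2 : ∑ j ∈ Finset.range (m2+1), (((j+1).factorial : ℝ))⁻¹ • a ^ (j+1) = 0 := by
      simpa using h1
    rw [hB, Finset.mul_sum]
    rw [← h2]
    apply Finset.sum_congr rfl
    intro j _
    rw [mul_smul_comm, ← pow_succ']
  set D : A := 1 - B with hD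
  have hAD : a * D = a := by rw [hD, mul_sub, mul_one, hAB, sub_zero]
  have hDnil : IsNilpotent D := by
    have hBeq : B = (∑ j ∈ Finset.range m2, (((j+1+1).factorial : ℝ))⁻¹ • a ^ (j+1)) + 1 := by
      rw [hB, Finset.sum_range_succ']
      norm_num
    have hDeq : D = -∑ j ∈ Finset.range m2, (((j+1+1).factorial : ℝ))⁻¹ • a ^ (j+1) := by
      rw [hD, hBeq]; abel
    rw [hDeq]
    apply IsNilpotent.neg
    apply Commute.isNilpotent_sum
    · intro j _
      have hnil : IsNilpotent (a ^ (j+1)) :=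
        ⟨m2+2, by rw [← pow_mul]; exact pow_eq_zero_of_le' ha (by nlinarith)⟩
      exact hnil.smul _
    · intro i j _ _
      exact (((Commute.refl a).pow_pow _ _).smul_left _).smul_right _
  obtain ⟨k, hk⟩ := hDnil
  have hpow : ∀ k, a * D ^ k = a := by
    intro k
    induction k with
    | zero => rw [pow_zero, mul_one]
    | succ k ih => rw [pow_succ, ← mul_assoc]  -- a * (D^k * D) = (a*D^k)*D
                   rw [ih, hAD]
  have := hpow k
  rw [hk, mul_zero] at this
  exact this.symm

end Helpers

lemma aeval_transpose {N : ℕ} (y : Matrix (Fin N) (Fin N) ℝ) (p : ℝ[X]) :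
    (Polynomial.aeval y p)ᵀ = Polynomial.aeval yᵀ p := by
  induction p using Polynomial.induction_on' with
  | add p q hp hq => rw [map_add, map_add, transpose_add, hp, hq]
  | monomial k a =>
    rw [aeval_monomial, aeval_monomial, ← Algebra.smul_def, ← Algebra.smul_def,
      transpose_smul, transpose_pow]

lemma exp_nilp {N : ℕ} (a : Matrix (Fin N) (Fin N) ℝ) {m : ℕ} (h : a ^ m = 0) :
    NormedSpace.exp a = ∑ j ∈ Finset.range m, ((j.factorial : ℝ))⁻¹ • a ^ j := by
  letI : SeminormedRing (Matrix (Fin N) (Fin N) ℝ) := Matrix.linftyOpSemiNormedRing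
  letI : NormedRing (Matrix (Fin N) (Fin N) ℝ) := Matrix.linftyOpNormedRing
  letI : NormedAlgebra ℝ (Matrix (Fin N) (Fin N) ℝ) := Matrix.linftyOpNormedAlgebra
  rw [NormedSpace.exp_eq_tsum (𝕂 := ℝ)]
  refine tsum_eq_sum fun j hj => ?_
  have hj' : m ≤ j := by simpa using hj
  rw [pow_eq_zero_of_le' h hj', smul_zero]

/-- The standard symplectic matrix `J_{2n}`: the `2n × 2n` block-diagonal matrix consisting
of `n` copies of the `2 × 2` block `[[0,-1],[1,0]]`. -/
def Jstd (n : ℕ) : Matrix (Fin (2 * n)) (Fin (2 * n)) ℝ :=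
  Matrix.of fun i j =>
    if i.val = j.val + 1 ∧ j.val % 2 = 0 then 1
    else if j.val = i.val + 1 ∧ i.val % 2 = 0 then -1
    else 0

lemma Jstd_transpose (n : ℕ) : (Jstd n)ᵀ = -(Jstd n) := by
  ext i j
  simp only [Jstd, transpose_apply, of_apply, Matrix.neg_apply]
  split_ifs <;> first | (exfalso; omega) | norm_num

lemma Jstd_mul_self (n : ℕ) : Jstd n * Jstd n = -1 := by
  ext i j
  rw [Matrix.mul_apply]
  have hi2 : i.val < 2 * n := i.isLt
  have hj2 : j.val < 2 * n := j.isLt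
  rcases Nat.even_or_odd i.val with hi | hi
  · obtain ⟨c, hc⟩ := hi
    have hlt : i.val + 1 < 2 * n := by omega
    rw [Finset.sum_eq_single (⟨i.val + 1, hlt⟩ : Fin (2*n))]
    · have hk : ((⟨i.val + 1, hlt⟩ : Fin (2*n)) : ℕ) = i.val + 1 := rfl
      rw [Matrix.neg_apply, Matrix.one_apply]
      simp only [Jstd, of_apply, hk, Fin.ext_iff, true_and, and_true]
      split_ifs <;> first | (exfalso; omega) | norm_num
    · intro k _ hkne
      have hkv : k.val ≠ i.val + 1 := fun h => hkne (Fin.ext h)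
      have hz : Jstd n i k = 0 := by
        simp only [Jstd, of_apply]
        rw [if_neg (by omega), if_neg (by omega)]
      rw [hz, zero_mul]
    · intro h; exact absurd (Finset.mem_univ _) h
  · obtain ⟨c, hc⟩ := hi
    have hlt : i.val - 1 < 2 * n := by omega
    rw [Finset.sum_eq_single (⟨i.val - 1, hlt⟩ : Fin (2*n))]
    · have hk : ((⟨i.val - 1, hlt⟩ : Fin (2*n)) : ℕ) = i.val - 1 := rfl
      rw [Matrix.neg_apply, Matrix.one_apply]
      simp only [Jstd, of_apply, hk, Fin.ext_iff, true_and, and_true]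
      split_ifs <;> first | (exfalso; omega) | norm_num
    · intro k _ hkne
      have hkv : k.val ≠ i.val - 1 := fun h => hkne (Fin.ext h)
      have hz : Jstd n i k = 0 := by
        simp only [Jstd, of_apply]
        rw [if_neg (by omega), if_neg (by omega)]
      rw [hz, zero_mul]
    · intro h; exact absurd (Finset.mem_univ _) h

/-- Every unipotent symplectic matrix is the exponential of a nilpotent infinitesimally
symplectic matrix of the form `J·S` with `S` symmetric: if `Mᵀ J_{2n} M = J_{2n}` and
`(M − I)^{2n} = 0`, then there is a symmetric `S` with `J_{2n}·S` nilpotent and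
`M = exp(J_{2n}·S)`. -/
theorem unipotent_symplectic_is_exp (n : ℕ) (M : Matrix (Fin (2 * n)) (Fin (2 * n)) ℝ)
    (hM : Mᵀ * Jstd n * M = Jstd n)
    (hunip : (M - 1) ^ (2 * n) = 0) :
    ∃ S : Matrix (Fin (2 * n)) (Fin (2 * n)) ℝ,
      Sᵀ = S ∧ IsNilpotent (Jstd n * S) ∧ M = NormedSpace.exp (Jstd n * S) := by
  rcases Nat.eq_zero_or_pos n with rfl | hn
  · haveI : IsEmpty (Fin (2*0)) := ⟨fun i => by have := i.isLt; omega⟩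
    refine ⟨0, ?_, ⟨1, ?_⟩, ?_⟩
    · ext i j; exact isEmptyElim i
    · ext i j; exact isEmptyElim i
    · ext i j; exact isEmptyElim i
  · have hm : 2 ≤ 2 * n := by omega
    set K := Jstd n with hKdef
    have hJT : Kᵀ = -K := Jstd_transpose n
    have hJJ : K * K = -1 := Jstd_mul_self n
    have hKK' : K * (-K) = 1 := by rw [mul_neg, hJJ, neg_neg]
    have hKK'' : (-K) * K = 1 := by rw [neg_mul, hJJ, neg_neg]
    set x := M - 1 with hx
    have hxm : x ^ (2 * n) = 0 := hunip
    have hMx : M = 1 + x := by rw [hx]; abel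
    set Minv := -K * Mᵀ * K with hMinvdef
    have hleft : Minv * M = 1 := by
      have h1 : Minv * M = -(K * (Mᵀ * K * M)) := by rw [hMinvdef]; noncomm_ring
      rw [h1, hM, hJJ, neg_neg]
    have hright : M * Minv = 1 := mul_eq_one_comm.mp hleft
    have hMT : Mᵀ = -(K * Minv * K) := by
      have h1 : -(K * Minv * K) = (K * K) * Mᵀ * (K * K) := by rw [hMinvdef]; noncomm_ring
      rw [h1, hJJ]; noncomm_ring
    have hdvdx : ∀ p : Polynomial ℝ, Polynomial.X ∣ p → (Polynomial.aeval x p) ^ (2 * n) = 0 := by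
      intro p hp
      obtain ⟨t, rfl⟩ := hp
      rw [← _root_.map_pow, mul_pow, _root_.map_mul, _root_.map_pow, Polynomial.aeval_X, hxm, zero_mul]
    set N := Polynomial.aeval x (plog (2 * n)) with hN
    have hNm : N ^ (2 * n) = 0 := hdvdx _ (X_dvd_plog (2 * n))
    obtain ⟨q, hq⟩ := pexp_key (2 * n) hm
    have haevalpexp : ∀ y : Matrix (Fin (2*n)) (Fin (2*n)) ℝ,
        Polynomial.aeval y (pexp (2 * n))
          = ∑ j ∈ Finset.range (2 * n), ((j.factorial : ℝ))⁻¹ • (Polynomial.aeval y (plog (2 * n))) ^ j := by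
      intro y
      rw [pexp, _root_.map_sum]
      refine Finset.sum_congr rfl fun j _ => ?_
      rw [_root_.map_mul, _root_.map_pow, Polynomial.aeval_C, ← Algebra.smul_def]
    have key : ∀ y : Matrix (Fin (2*n)) (Fin (2*n)) ℝ, y ^ (2 * n) = 0 →
        NormedSpace.exp (Polynomial.aeval y (plog (2 * n))) = 1 + y := by
      intro y hy
      have hdvd : ∀ p : Polynomial ℝ, Polynomial.X ∣ p → (Polynomial.aeval y p) ^ (2 * n) = 0 := by
        intro p hp
        obtain ⟨t, rfl⟩ := hp
        rw [← _root_.map_pow, mul_pow, _root_.map_mul, _root_.map_pow, Polynomial.aeval_X, hy, zero_mul]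
      have h1 := hdvd _ (X_dvd_plog (2 * n))
      rw [exp_nilp _ h1, ← haevalpexp y, hq]
      rw [_root_.map_add, _root_.map_add, _root_.map_one, Polynomial.aeval_X, _root_.map_mul, _root_.map_pow,
        Polynomial.aeval_X, hy, zero_mul, add_zero]
    have hexpN : NormedSpace.exp N = M := by rw [hN, key x hxm]; exact hMx.symm
    have hMinv_eq : Minv = 1 + Polynomial.aeval x (pginv (2 * n)) := by
      have hgeo : M * (1 + Polynomial.aeval x (pginv (2 * n))) = 1 := by
        have h2 : (1 + Polynomial.X) * (1 + pginv (2 * n)) = 1 - (-Polynomial.X)^(2 * n) := by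
          rw [pginv]
          have hg := geom_sum_mul (-Polynomial.X : Polynomial ℝ) (2 * n)
          linear_combination -hg
        have h3 : Polynomial.aeval x ((1 + Polynomial.X) * (1 + pginv (2 * n))) = 1 := by
          rw [h2, _root_.map_sub, _root_.map_one, _root_.map_pow, _root_.map_neg, Polynomial.aeval_X, neg_pow, hxm,
            mul_zero, sub_zero]
        calc M * (1 + Polynomial.aeval x (pginv (2 * n)))
            = Polynomial.aeval x ((1 + Polynomial.X) * (1 + pginv (2 * n))) := by
              rw [_root_.map_mul, _root_.map_add, _root_.map_add, _root_.map_one, Polynomial.aeval_X, ← hMx]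
          _ = 1 := h3
      calc Minv = Minv * (M * (1 + Polynomial.aeval x (pginv (2 * n)))) := by rw [hgeo, mul_one]
        _ = (Minv * M) * (1 + Polynomial.aeval x (pginv (2 * n))) := (mul_assoc _ _ _).symm
        _ = 1 + Polynomial.aeval x (pginv (2 * n)) := by rw [hleft, one_mul]
    set N' := Polynomial.aeval x ((plog (2 * n)).comp (pginv (2 * n))) with hN'
    have hN'alt : N' = Polynomial.aeval (Polynomial.aeval x (pginv (2 * n))) (plog (2 * n)) := by
      rw [hN', Polynomial.aeval_comp]
    have hy : (Polynomial.aeval x (pginv (2 * n))) ^ (2 * n) = 0 := hdvdx _ (X_dvd_pginv (2 * n) (by omega))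
    have hMinv_sub : Minv - 1 = Polynomial.aeval x (pginv (2 * n)) := by rw [hMinv_eq]; abel
    have hexpN' : NormedSpace.exp N' = Minv := by
      rw [hN'alt, key _ hy]; exact hMinv_eq.symm
    have hcomm : N * N' = N' * N := by
      rw [hN, hN', ← _root_.map_mul, ← _root_.map_mul]
      exact congrArg _ (mul_comm _ _)
    have hprod : NormedSpace.exp (N + N') = 1 := by
      rw [Matrix.exp_add_of_commute N N' hcomm, hexpN, hexpN', hright]
    have hNN'm : (N + N') ^ (2 * n) = 0 := by
      rw [hN, hN', ← _root_.map_add]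
      apply hdvdx
      rw [Polynomial.X_dvd_iff, Polynomial.coeff_add, Polynomial.coeff_zero_eq_eval_zero,
        Polynomial.coeff_zero_eq_eval_zero, Polynomial.eval_comp,
        pginv_eval_zero (2 * n) (by omega), plog_eval_zero, add_zero]
    have hsum1 : ∑ j ∈ Finset.range (2 * n), ((j.factorial : ℝ))⁻¹ • (N + N') ^ j = 1 := by
      rw [← exp_nilp _ hNN'm, hprod]
    have hNN'0 : N + N' = 0 := nilpotent_eq_zero_of_expsum _ (2 * n) hm hNN'm hsum1
    have hN'negN : N' = -N := by
      have := neg_eq_of_add_eq_zero_right hNN'0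
      exact this.symm
    have hxT : xᵀ = (-K) * (Minv - 1) * K := by
      have h1 : (-K) * (Minv - 1) * K = -(K * Minv * K) + K * K := by noncomm_ring
      rw [hx, transpose_sub, transpose_one, h1, ← hMT, hJJ]
      abel
    have hNT : Nᵀ = (-K) * N' * K := by
      have hc := aeval_conj hKK'' hKK' (Minv - 1) (plog (2 * n))
      rw [hN, aeval_transpose, hxT, hc, hMinv_sub, ← hN'alt]
    refine ⟨Kᵀ * N, ?_, ?_, ?_⟩
    · rw [transpose_mul, transpose_transpose, hNT, hN'negN, hJT]
      have h1 : (-K) * (-N) * K * K = K * N * (K * K) := by noncomm_ring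
      rw [h1, hJJ]
      noncomm_ring
    · have hJS : K * (Kᵀ * N) = N := by rw [hJT, ← mul_assoc, hKK', one_mul]
      rw [hJS]
      exact ⟨(2 * n), hNm⟩
    · have hJS : K * (Kᵀ * N) = N := by rw [hJT, ← mul_assoc, hKK', one_mul]
      rw [hJS, hexpN]
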